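/- Let X be a Tychonoff (completely regular Hausdorff) ω-bounded space (the closure of every countable subset of X is compact). Then the following are equivalent: (1) X is scattered; (2) every compact subset of X is scattered; (3) X is a Δ₁-space, i.e., for every decreasing sequence (D_n)_{n∈ℕ} of countable subsets of X with ⋂_n D_n = ∅ there is a decreasing sequence (V_n)_{n∈ℕ} of open subsets of X with D_n ⊆ V_n for each n and ⋂_n V_n = ∅. -/

import Mathlib

open Set Topology Filter

/-! Auxiliary material for `stmt18`. -/

section Stmt18Aux

variable {X : Type*} [TopologicalSpace X]

/-- A crowded (no relatively isolated point) set meets every open set that it meets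
in an infinite set. -/
lemma stmt18_crowded_inter_infinite [T1Space X] {A : Set X}
    (hA : ∀ a ∈ A, ∀ U : Set X, IsOpen U → U ∩ A ≠ {a})
    {U : Set X} (hU : IsOpen U) {a : X} (ha : a ∈ U ∩ A) : (U ∩ A).Infinite := by
  by_contra hfin
  rw [Set.not_infinite] at hfin
  have hcl : IsClosed ((U ∩ A) \ {a}) := (hfin.diff).isClosed
  have hUopen : IsOpen (U \ ((U ∩ A) \ {a})) := hU.sdiff hcl
  refine hA a ha.2 _ hUopen ?_
  ext x
  constructor
  · rintro ⟨⟨hxU, hxn⟩, hxA⟩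
    by_contra hxa
    exact hxn ⟨⟨hxU, hxA⟩, hxa⟩
  · rintro rfl
    exact ⟨⟨ha.1, fun h => h.2 rfl⟩, ha.2⟩

lemma stmt18_not_countable_nat_bool : ¬ Countable (ℕ → Bool) := by
  intro h
  classical
  have hinj : Function.Injective (fun (S : Set ℕ) (n : ℕ) => if n ∈ S then true else false) := by
    intro S T hST
    ext n
    have := congrFun hST n
    by_cases hS : n ∈ S <;> by_cases hT : n ∈ T <;> simp_all
  have : Countable (Set ℕ) := hinj.countable
  obtain ⟨f, hf⟩ := Countable.exists_injective_nat (Set ℕ)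
  exact Function.cantor_injective f hf

/-- Zorn: a minimal compact subset of `K` mapping onto `P`. -/
lemma stmt18_exists_minimal_preimage {Y : Type*} [TopologicalSpace Y] [T2Space X] [T1Space Y]
    {f : X → Y} (hf : Continuous f)
    {K : Set X} (hK : IsCompact K) {P : Set Y} (hPc : IsClosed P) (hP : P ⊆ f '' K) :
    ∃ M, M ⊆ K ∧ IsCompact M ∧ f '' M = P ∧
      ∀ M', M' ⊆ M → IsCompact M' → f '' M' = P → M' = M := by
  set S : Set (Set X) := {M | M ⊆ K ∧ IsCompact M ∧ f '' M = P} with hS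
  have hstart : K ∩ f ⁻¹' P ∈ S := by
    refine ⟨inter_subset_left, hK.inter_right (hPc.preimage hf), ?_⟩
    apply subset_antisymm
    · rintro y ⟨x, ⟨-, hx2⟩, rfl⟩; exact hx2
    · intro p hp
      obtain ⟨k, hk, rfl⟩ := hP hp
      exact ⟨k, ⟨hk, hp⟩, rfl⟩
  have hchain : ∀ c ⊆ S, IsChain (· ⊆ ·) c → c.Nonempty → ∃ lb ∈ S, ∀ s ∈ c, lb ⊆ s := by
    intro c hcS hchain hcne
    obtain ⟨M₀, hM₀⟩ := hcne
    refine ⟨⋂₀ c, ⟨?_, ?_, ?_⟩, fun s hs => sInter_subset_of_mem hs⟩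
    · exact (sInter_subset_of_mem hM₀).trans (hcS hM₀).1
    · refine IsCompact.of_isClosed_subset (hcS hM₀).2.1 ?_ (sInter_subset_of_mem hM₀)
      exact isClosed_sInter fun M hM => (hcS hM).2.1.isClosed
    · apply subset_antisymm
      · rintro y ⟨x, hx, rfl⟩
        rw [← (hcS hM₀).2.2]
        exact ⟨x, hx M₀ hM₀, rfl⟩
      · intro p hp
        have hne : ∀ M : c, ((M : Set X) ∩ f ⁻¹' {p}).Nonempty := by
          rintro ⟨M, hM⟩
          have : p ∈ f '' M := by rw [(hcS hM).2.2]; exact hp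
          obtain ⟨x, hx, hfx⟩ := this
          exact ⟨x, hx, hfx⟩
        have hdir : Directed (· ⊇ ·) (fun M : c => (M : Set X) ∩ f ⁻¹' {p}) := by
          rintro ⟨M, hM⟩ ⟨N, hN⟩
          rcases eq_or_ne M N with rfl | hMN
          · exact ⟨⟨M, hM⟩, Subset.rfl, Subset.rfl⟩
          · rcases hchain hM hN hMN with h | h
            · exact ⟨⟨M, hM⟩, Subset.rfl, inter_subset_inter_left _ h⟩
            · exact ⟨⟨N, hN⟩, inter_subset_inter_left _ h, Subset.rfl⟩
        haveI : Nonempty c := ⟨⟨M₀, hM₀⟩⟩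
        have hint := IsCompact.nonempty_iInter_of_directed_nonempty_isCompact_isClosed
          (fun M : c => (M : Set X) ∩ f ⁻¹' {p}) hdir hne
          (fun M => ((hcS M.2).2.1).inter_right ((isClosed_singleton).preimage hf))
          (fun M => ((hcS M.2).2.1.isClosed).inter ((isClosed_singleton).preimage hf))
        obtain ⟨x, hx⟩ := hint
        simp only [mem_iInter, mem_inter_iff, mem_preimage, mem_singleton_iff] at hx
        refine ⟨x, ?_, (hx ⟨M₀, hM₀⟩).2⟩
        intro M hM
        exact (hx ⟨M, hM⟩).1
  obtain ⟨m, hmx, hmin⟩ := zorn_superset_nonempty S hchain _ hstart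
  refine ⟨m, hmin.prop.1, hmin.prop.2.1, hmin.prop.2.2, ?_⟩
  intro M' hM'm hM'c hM'P
  exact subset_antisymm hM'm (hmin.2 ⟨hM'm.trans hmin.prop.1, hM'c, hM'P⟩ hM'm)

/-- Key property of a minimal preimage: any open set meeting `M` contains a full trace
`M ∩ f ⁻¹' O` for some open `O` meeting `P`. -/
lemma stmt18_minimal_trace {Y : Type*} [TopologicalSpace Y] [T2Space X] [T2Space Y] {f : X → Y}
    (hf : Continuous f)
    {M : Set X} (hM : IsCompact M) {P : Set Y} (hfM : f '' M = P)
    (hmin : ∀ M', M' ⊆ M → IsCompact M' → f '' M' = P → M' = M)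
    {W : Set X} (hW : IsOpen W) (hWM : (W ∩ M).Nonempty) :
    ∃ O : Set Y, IsOpen O ∧ (O ∩ P).Nonempty ∧ M ∩ f ⁻¹' O ⊆ W := by
  have hM'c : IsCompact (M \ W) := hM.diff hW
  have hne : f '' (M \ W) ≠ P := by
    intro h
    have := hmin (M \ W) diff_subset hM'c h
    obtain ⟨x, hxW, hxM⟩ := hWM
    have : x ∈ M \ W := this.symm ▸ hxM
    exact this.2 hxW
  have hsub : f '' (M \ W) ⊆ P := by rw [← hfM]; exact image_mono (f := f) diff_subset
  obtain ⟨p, hpP, hpn⟩ : ∃ p ∈ P, p ∉ f '' (M \ W) := by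
    by_contra h
    push_neg at h
    exact hne (subset_antisymm hsub h)
  refine ⟨(f '' (M \ W))ᶜ, (hM'c.image hf).isClosed.isOpen_compl, ⟨p, hpn, hpP⟩, ?_⟩
  rintro x ⟨hxM, hxO⟩
  by_contra hxW
  exact hxO ⟨x, ⟨hxM, hxW⟩, rfl⟩

/-- If every nonempty subset of the compact set `K` has a relatively isolated point, then a
continuous image of `K` in a second-countable Hausdorff space is countable. -/
lemma stmt18_image_countable_of_scattered {H : Type*} [TopologicalSpace H] [T2Space H]
    [SecondCountableTopology H] [T2Space X] {f : X → H} (hf : Continuous f)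
    {K : Set X} (hK : IsCompact K)
    (hscat : ∀ A ⊆ K, A.Nonempty → ∃ a ∈ A, ∃ U : Set X, IsOpen U ∧ U ∩ A = {a}) :
    (f '' K).Countable := by
  obtain ⟨V, P, hVcnt, hPperf, hVP⟩ :=
    exists_countable_union_perfect_of_isClosed (C := f '' K) (hK.image hf).isClosed
  rcases P.eq_empty_or_nonempty with rfl | hPne
  · rw [hVP]; simpa using hVcnt
  · exfalso
    have hPK : P ⊆ f '' K := by rw [hVP]; exact subset_union_right
    obtain ⟨M, hMK, hMc, hMP, hmin⟩ := stmt18_exists_minimal_preimage hf hK hPperf.closed hPK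
    have hMne : M.Nonempty := by
      obtain ⟨p, hp⟩ := hPne
      have : p ∈ f '' M := hMP.symm ▸ hp
      obtain ⟨x, hx, -⟩ := this
      exact ⟨x, hx⟩
    obtain ⟨a, haM, U, hU, hUM⟩ := hscat M hMK hMne
    have hWM : (U ∩ M).Nonempty := ⟨a, hUM.symm ▸ rfl⟩
    obtain ⟨O, hO, hOP, hMO⟩ := stmt18_minimal_trace hf hMc hMP hmin hU hWM
    have hOPfa : ∀ q ∈ O ∩ P, q = f a := by
      rintro q ⟨hqO, hqP⟩
      have : q ∈ f '' M := hMP.symm ▸ hqP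
      obtain ⟨m, hm, rfl⟩ := this
      have : m ∈ U ∩ M := ⟨(hMO ⟨hm, hqO⟩ : _), hm⟩
      have : m = a := by rw [hUM] at this; exact this
      rw [this]
    obtain ⟨q, hq⟩ := hOP
    have hfaO : f a ∈ O ∩ P := (hOPfa q hq) ▸ hq
    have hacc := hPperf.acc (f a) hfaO.2
    rw [accPt_iff_nhds] at hacc
    obtain ⟨y, ⟨hyO, hyP⟩, hyne⟩ := hacc O (hO.mem_nhds hfaO.1)
    exact hyne (hOPfa y ⟨hyO, hyP⟩)

/-- The key metric-space construction: a decreasing sequence of sets with empty intersection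
and countable closure admits a decreasing open expansion with empty intersection. -/
lemma stmt18_metric_shrink {H : Type*} [TopologicalSpace H] [TopologicalSpace.MetrizableSpace H]
    (E : ℕ → Set H) (hdec : ∀ n, E (n + 1) ⊆ E n) (hempty : (⋂ n, E n) = ∅)
    (hcnt : (closure (E 0)).Countable) :
    ∃ W : ℕ → Set H, (∀ n, IsOpen (W n)) ∧ (∀ n, W (n + 1) ⊆ W n) ∧ (∀ n, E n ⊆ W n) ∧
      (⋂ n, W n) = ∅ := by
  letI : MetricSpace H := TopologicalSpace.metrizableSpaceMetric H
  have hmon : ∀ {m n : ℕ}, m ≤ n → E n ⊆ E m := by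
    intro m n h
    exact antitone_nat_of_succ_le (fun k => hdec k) h
  rcases (closure (E 0)).eq_empty_or_nonempty with hcl | hne
  · have hE0 : E 0 = ∅ := eq_empty_of_subset_empty (hcl ▸ subset_closure)
    refine ⟨fun _ => ∅, fun _ => isOpen_empty, fun _ => Subset.rfl, fun n => ?_, by
      rw [iInter_const]⟩
    exact fun x hx => absurd (hE0 ▸ hmon (Nat.zero_le n) hx) (notMem_empty x)
  obtain ⟨c, hc⟩ := hcnt.exists_eq_range hne
  classical
  set F : ℕ → Set H := fun n => c '' {i | i ≤ n ∧ c i ∉ E n} with hF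
  have hFfin : ∀ n, (F n).Finite := by
    intro n
    exact ((Set.finite_Iic n).subset (fun i hi => hi.1)).image c
  have hFnotE : ∀ n, ∀ y ∈ F n, y ∉ E n := by
    rintro n y ⟨i, ⟨-, hi⟩, rfl⟩
    exact hi
  set r : ℕ → H → ℝ := fun n x =>
    if (F n).Nonempty then min ((1/2 : ℝ)^n) (Metric.infDist x (F n) / 2) else (1/2 : ℝ)^n
    with hr
  have hrpos : ∀ n x, x ∈ E n → 0 < r n x := by
    intro n x hx
    simp only [hr]
    split_ifs with h
    · refine lt_min (by positivity) ?_
      have hxF : x ∉ F n := fun hxF => hFnotE n x hxF hx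
      have := ((hFfin n).isClosed.notMem_iff_infDist_pos h).mp hxF
      linarith
    · positivity
  have hrle : ∀ n x, r n x ≤ (1/2 : ℝ)^n := by
    intro n x
    simp only [hr]
    split_ifs with h
    · exact min_le_left _ _
    · exact le_rfl
  have hrF : ∀ n x, (F n).Nonempty → r n x ≤ Metric.infDist x (F n) / 2 := by
    intro n x h
    simp only [hr, if_pos h]
    exact min_le_right _ _
  set W' : ℕ → Set H := fun n => ⋃ x ∈ E n, Metric.ball x (r n x) with hW'
  have hW'open : ∀ n, IsOpen (W' n) := fun n =>
    isOpen_biUnion fun x _ => Metric.isOpen_ball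
  set W : ℕ → Set H := fun n => ⋂ k ∈ Finset.range (n + 1), W' k with hW
  have hWopen : ∀ n, IsOpen (W n) := fun n =>
    isOpen_biInter_finset fun k _ => hW'open k
  have hWdec : ∀ n, W (n + 1) ⊆ W n := by
    intro n x hx
    rw [hW, mem_iInter₂] at hx ⊢
    intro k hk
    exact hx k (Finset.mem_range.mpr (Nat.lt_succ_of_lt (Finset.mem_range.mp hk)))
  have hEW : ∀ n, E n ⊆ W n := by
    intro n x hx
    rw [hW, mem_iInter₂]
    intro k hk
    have hxk : x ∈ E k := hmon (Nat.lt_succ_iff.mp (Finset.mem_range.mp hk)) hx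
    exact mem_biUnion hxk (Metric.mem_ball_self (hrpos k x hxk))
  refine ⟨W, hWopen, hWdec, hEW, ?_⟩
  rw [eq_empty_iff_forall_notMem]
  intro y hy
  rw [mem_iInter] at hy
  have hyW' : ∀ n, ∃ x ∈ E n, y ∈ Metric.ball x (r n x) := by
    intro n
    have := hy n
    rw [hW, mem_iInter₂] at this
    have := this n (Finset.mem_range.mpr (Nat.lt_succ_self n))
    rw [hW', mem_iUnion₂] at this
    obtain ⟨x, hx, hball⟩ := this
    exact ⟨x, hx, hball⟩
  have hycl : ∀ m, y ∈ closure (E m) := by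
    intro m
    rw [Metric.mem_closure_iff]
    intro ε hε
    obtain ⟨N, hN⟩ := exists_pow_lt_of_lt_one hε (by norm_num : (1/2 : ℝ) < 1)
    obtain ⟨x, hxE, hxball⟩ := hyW' (max m N)
    refine ⟨x, hmon (le_max_left m N) hxE, ?_⟩
    have h1 : dist y x < r (max m N) x := Metric.mem_ball.mp hxball
    have h2 : r (max m N) x ≤ (1/2 : ℝ) ^ (max m N) := hrle _ _
    have h3 : (1/2 : ℝ) ^ (max m N) ≤ (1/2 : ℝ) ^ N :=
      pow_le_pow_of_le_one (by norm_num) (by norm_num) (le_max_right m N)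
    linarith
  have hyE0 : y ∈ closure (E 0) := hycl 0
  rw [hc] at hyE0
  obtain ⟨i₀, rfl⟩ := hyE0
  have : ∃ m₀, c i₀ ∉ E m₀ := by
    by_contra h
    push_neg at h
    have : c i₀ ∈ ⋂ n, E n := mem_iInter.mpr h
    rw [hempty] at this
    exact this
  obtain ⟨m₀, hm₀⟩ := this
  set n := max i₀ m₀ with hn
  have hyF : c i₀ ∈ F n := ⟨i₀, ⟨le_max_left _ _, fun h => hm₀ (hmon (le_max_right i₀ m₀) h)⟩, rfl⟩
  obtain ⟨x, hxE, hxball⟩ := hyW' n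
  have h1 : dist (c i₀) x < r n x := Metric.mem_ball.mp hxball
  have h2 : r n x ≤ Metric.infDist x (F n) / 2 := hrF n x ⟨_, hyF⟩
  have h3 : Metric.infDist x (F n) ≤ dist x (c i₀) := Metric.infDist_le_dist_of_mem hyF
  rw [dist_comm] at h3
  have h4 : (0:ℝ) ≤ dist (c i₀) x := dist_nonneg
  linarith

/-- A continuous map to `(ℕ × ℕ) → ℝ` injective on a given countable set. -/
lemma stmt18_exists_separating_map [T35Space X] {D : Set X} (hD : D.Countable) :
    ∃ f : X → ((ℕ × ℕ) → ℝ), Continuous f ∧ D.InjOn f := by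
  rcases D.eq_empty_or_nonempty with rfl | hne
  · exact ⟨fun _ _ => 0, continuous_const, injOn_empty _⟩
  obtain ⟨e, he⟩ := hD.exists_eq_range hne
  have sep : ∀ i j : ℕ, ∃ g : X → ℝ, Continuous g ∧
      (e i ≠ e j → g (e i) = 0 ∧ g (e j) = 1) := by
    intro i j
    by_cases h : e i = e j
    · exact ⟨fun _ => 0, continuous_const, fun hc => absurd h hc⟩
    · obtain ⟨g, gc, g0, g1⟩ := CompletelyRegularSpace.completely_regular (e i) {e j}
        isClosed_singleton (by simpa using h)
      refine ⟨fun x => (g x : ℝ), continuous_subtype_val.comp gc, fun _ => ⟨?_, ?_⟩⟩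
      · show (g (e i) : ℝ) = 0
        rw [g0]; rfl
      · show (g (e j) : ℝ) = 1
        have := g1 (mem_singleton (e j))
        rw [this]; rfl
  choose g hgc hgsep using sep
  refine ⟨fun x p => g p.1 p.2 x, ?_, ?_⟩
  · exact continuous_pi fun p => hgc p.1 p.2
  · intro x hx y hy hxy
    by_contra hne'
    rw [he] at hx hy
    obtain ⟨i, rfl⟩ := hx
    obtain ⟨j, rfl⟩ := hy
    obtain ⟨h0, h1⟩ := hgsep i j hne'
    have := congrFun hxy (i, j)
    simp only at this
    rw [h0, h1] at this
    norm_num at this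

/-- Direction (2) ⇒ (3). -/
lemma stmt18_two_implies_three [T35Space X]
    (hωb : ∀ A : Set X, A.Countable → IsCompact (closure A))
    (hscat : ∀ K : Set X, IsCompact K → ∀ A ⊆ K, A.Nonempty →
      ∃ a ∈ A, ∃ U : Set X, IsOpen U ∧ U ∩ A = {a}) :
    ∀ D : ℕ → Set X, (∀ n, (D n).Countable) → (∀ n, D (n + 1) ⊆ D n) →
      (⋂ n, D n) = ∅ →
      ∃ V : ℕ → Set X, (∀ n, IsOpen (V n)) ∧ (∀ n, V (n + 1) ⊆ V n) ∧
        (∀ n, D n ⊆ V n) ∧ (⋂ n, V n) = ∅ := by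
  intro D hDcnt hDdec hDempty
  have hDmon : ∀ {m n : ℕ}, m ≤ n → D n ⊆ D m := by
    intro m n h
    exact antitone_nat_of_succ_le (fun k => hDdec k) h
  obtain ⟨f, hfc, hfinj⟩ := stmt18_exists_separating_map (hDcnt 0)
  set K := closure (D 0) with hKdef
  have hK : IsCompact K := hωb _ (hDcnt 0)
  have hYcnt : (f '' K).Countable := stmt18_image_countable_of_scattered hfc hK (hscat K hK)
  set E : ℕ → Set ((ℕ × ℕ) → ℝ) := fun n => f '' D n with hE
  have hEcl : closure (E 0) ⊆ f '' K :=
    closure_minimal (image_mono (f := f) subset_closure) (hK.image hfc).isClosed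
  have hEclcnt : (closure (E 0)).Countable := hYcnt.mono hEcl
  have hEdec : ∀ n, E (n + 1) ⊆ E n := fun n => image_mono (f := f) (hDdec n)
  have hEempty : (⋂ n, E n) = ∅ := by
    rw [eq_empty_iff_forall_notMem]
    intro y hy
    rw [mem_iInter] at hy
    have hd : ∀ n, ∃ d ∈ D n, f d = y := fun n => hy n
    choose d hdmem hdf using hd
    have : ∀ n, d n = d 0 := by
      intro n
      apply hfinj (hDmon (Nat.zero_le n) (hdmem n)) (hdmem 0)
      rw [hdf n, hdf 0]
    have hd0 : d 0 ∈ ⋂ n, D n := mem_iInter.mpr fun n => (this n) ▸ hdmem n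
    rw [hDempty] at hd0
    exact hd0
  obtain ⟨W, hWopen, hWdec, hEW, hWempty⟩ := stmt18_metric_shrink E hEdec hEempty hEclcnt
  refine ⟨fun n => f ⁻¹' W n, fun n => (hWopen n).preimage hfc,
    fun n => preimage_mono (hWdec n), fun n x hx => hEW n (mem_image_of_mem f hx), ?_⟩
  rw [← preimage_iInter, hWempty, preimage_empty]

end Stmt18Aux

/-! The tree machinery for direction (3) ⇒ (1). -/

section Stmt18Tree

variable {X : Type*} [TopologicalSpace X]

structure Stmt18SplitData (X : Type*) where
  p0 : X
  p1 : X
  V0 : Set X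
  V1 : Set X
  g : X → ℝ

structure Stmt18GoodSplit [TopologicalSpace X] (A : Set X) (U : Set X) (F : List X)
    (d : Stmt18SplitData X) : Prop where
  cont : Continuous d.g
  mem0 : d.p0 ∈ A
  mem1 : d.p1 ∈ A
  pV0 : d.p0 ∈ d.V0
  pV1 : d.p1 ∈ d.V1
  open0 : IsOpen d.V0
  open1 : IsOpen d.V1
  sub0 : d.V0 ⊆ U
  sub1 : d.V1 ⊆ U
  avoid0 : d.p0 ∉ F
  avoid1 : d.p1 ∉ F
  low : ∀ x ∈ d.V0, d.g x ≤ 1/3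
  high : ∀ x ∈ d.V1, 2/3 ≤ d.g x

lemma stmt18_exists_split [T35Space X] {A : Set X}
    (hA : ∀ a ∈ A, ∀ U : Set X, IsOpen U → U ∩ A ≠ {a})
    {a : X} {U : Set X} (ha : a ∈ A) (haU : a ∈ U) (hU : IsOpen U) (F : List X) :
    ∃ d : Stmt18SplitData X, Stmt18GoodSplit A U F d := by
  have hinf : (U ∩ A).Infinite := stmt18_crowded_inter_infinite hA hU ⟨haU, ha⟩
  have hinf' : ((U ∩ A) \ {x | x ∈ F}).Infinite := hinf.diff (F.finite_toSet)
  obtain ⟨a₀, ha₀⟩ := hinf'.nonempty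
  have hinf'' : (((U ∩ A) \ {x | x ∈ F}) \ {a₀}).Infinite := hinf'.diff (finite_singleton a₀)
  obtain ⟨a₁, ha₁⟩ := hinf''.nonempty
  have hne : a₀ ≠ a₁ := fun h => ha₁.2 (h ▸ rfl)
  obtain ⟨g, gc, g0, g1⟩ := CompletelyRegularSpace.completely_regular a₀ {a₁}
    isClosed_singleton (by simpa using hne)
  set gr : X → ℝ := fun x => (g x : ℝ) with hgr
  have grc : Continuous gr := continuous_subtype_val.comp gc
  refine ⟨⟨a₀, a₁, U ∩ gr ⁻¹' (Iio (1/3)), U ∩ gr ⁻¹' (Ioi (2/3)), gr⟩, ?_⟩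
  have hga0 : gr a₀ = 0 := by show (g a₀ : ℝ) = 0; rw [g0]; rfl
  have hga1 : gr a₁ = 1 := by
    show (g a₁ : ℝ) = 1
    have := g1 (mem_singleton a₁)
    rw [this]; rfl
  constructor
  · exact grc
  · exact ha₀.1.2
  · exact ha₁.1.1.2
  · exact ⟨ha₀.1.1, by rw [mem_preimage, hga0]; norm_num⟩
  · exact ⟨ha₁.1.1.1, by rw [mem_preimage, hga1]; norm_num⟩
  · exact IsOpen.inter hU (isOpen_Iio.preimage grc)
  · exact IsOpen.inter hU (isOpen_Ioi.preimage grc)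
  · exact inter_subset_left
  · exact inter_subset_left
  · exact ha₀.2
  · exact ha₁.1.2
  · exact fun x hx => le_of_lt hx.2
  · exact fun x hx => le_of_lt hx.2

variable [T35Space X]

open Classical in
noncomputable def stmt18SplitF {A : Set X} (hA : ∀ a ∈ A, ∀ U : Set X, IsOpen U → U ∩ A ≠ {a})
    (a : X) (U : Set X) (F : List X) : Stmt18SplitData X :=
  if h : a ∈ A ∧ a ∈ U ∧ IsOpen U then (stmt18_exists_split hA h.1 h.2.1 h.2.2 F).choose
  else ⟨a, a, ∅, ∅, fun _ => 0⟩

lemma stmt18SplitF_spec {A : Set X} (hA : ∀ a ∈ A, ∀ U : Set X, IsOpen U → U ∩ A ≠ {a})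
    {a : X} {U : Set X} (h1 : a ∈ A) (h2 : a ∈ U) (h3 : IsOpen U) (F : List X) :
    Stmt18GoodSplit A U F (stmt18SplitF hA a U F) := by
  classical
  rw [stmt18SplitF]
  rw [dif_pos ⟨h1, h2, h3⟩]
  exact (stmt18_exists_split hA h1 h2 h3 F).choose_spec

noncomputable def stmt18Tree {A : Set X} (hA : ∀ a ∈ A, ∀ U : Set X, IsOpen U → U ∩ A ≠ {a})
    (astar : X) : List Bool → X × Set X × List X
  | [] => (astar, Set.univ, [])
  | (i :: s) =>
      let t := stmt18Tree hA astar s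
      let d := stmt18SplitF hA t.1 t.2.1 (t.1 :: t.2.2)
      (cond i d.p1 d.p0, cond i d.V1 d.V0, t.1 :: t.2.2)

variable {A : Set X} (hA : ∀ a ∈ A, ∀ U : Set X, IsOpen U → U ∩ A ≠ {a})
variable (astar : X)

lemma stmt18Tree_cons (i : Bool) (s : List Bool) :
    stmt18Tree hA astar (i :: s) =
      (cond i (stmt18SplitF hA (stmt18Tree hA astar s).1 (stmt18Tree hA astar s).2.1
          ((stmt18Tree hA astar s).1 :: (stmt18Tree hA astar s).2.2)).p1
        (stmt18SplitF hA (stmt18Tree hA astar s).1 (stmt18Tree hA astar s).2.1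
          ((stmt18Tree hA astar s).1 :: (stmt18Tree hA astar s).2.2)).p0,
       cond i (stmt18SplitF hA (stmt18Tree hA astar s).1 (stmt18Tree hA astar s).2.1
          ((stmt18Tree hA astar s).1 :: (stmt18Tree hA astar s).2.2)).V1
        (stmt18SplitF hA (stmt18Tree hA astar s).1 (stmt18Tree hA astar s).2.1
          ((stmt18Tree hA astar s).1 :: (stmt18Tree hA astar s).2.2)).V0,
       (stmt18Tree hA astar s).1 :: (stmt18Tree hA astar s).2.2) := rfl

lemma stmt18Tree_inv (hastar : astar ∈ A) : ∀ s : List Bool, (stmt18Tree hA astar s).1 ∈ A ∧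
    (stmt18Tree hA astar s).1 ∈ (stmt18Tree hA astar s).2.1 ∧
    IsOpen (stmt18Tree hA astar s).2.1
  | [] => ⟨hastar, mem_univ _, isOpen_univ⟩
  | (i :: s) => by
      obtain ⟨h1, h2, h3⟩ := stmt18Tree_inv hastar s
      have hgs := stmt18SplitF_spec hA h1 h2 h3
        ((stmt18Tree hA astar s).1 :: (stmt18Tree hA astar s).2.2)
      rw [stmt18Tree_cons]
      cases i
      · exact ⟨hgs.mem0, hgs.pV0, hgs.open0⟩
      · exact ⟨hgs.mem1, hgs.pV1, hgs.open1⟩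

lemma stmt18Tree_split (hastar : astar ∈ A) (s : List Bool) :
    Stmt18GoodSplit A (stmt18Tree hA astar s).2.1
      ((stmt18Tree hA astar s).1 :: (stmt18Tree hA astar s).2.2)
      (stmt18SplitF hA (stmt18Tree hA astar s).1 (stmt18Tree hA astar s).2.1
        ((stmt18Tree hA astar s).1 :: (stmt18Tree hA astar s).2.2)) := by
  obtain ⟨h1, h2, h3⟩ := stmt18Tree_inv hA astar hastar s
  exact stmt18SplitF_spec hA h1 h2 h3 _

lemma stmt18Tree_op_child (hastar : astar ∈ A) (i : Bool) (s : List Bool) :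
    (stmt18Tree hA astar (i :: s)).2.1 ⊆ (stmt18Tree hA astar s).2.1 := by
  have hgs := stmt18Tree_split hA astar hastar s
  rw [stmt18Tree_cons]
  cases i
  · exact hgs.sub0
  · exact hgs.sub1

lemma stmt18Tree_low (hastar : astar ∈ A) (s : List Bool) :
    closure ((stmt18Tree hA astar (false :: s)).2.1) ⊆
      {x | (stmt18SplitF hA (stmt18Tree hA astar s).1 (stmt18Tree hA astar s).2.1
        ((stmt18Tree hA astar s).1 :: (stmt18Tree hA astar s).2.2)).g x ≤ 1/3} := by
  have hgs := stmt18Tree_split hA astar hastar s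
  apply closure_minimal
  · intro x hx
    rw [stmt18Tree_cons] at hx
    exact hgs.low x hx
  · exact isClosed_le hgs.cont continuous_const

lemma stmt18Tree_high (hastar : astar ∈ A) (s : List Bool) :
    closure ((stmt18Tree hA astar (true :: s)).2.1) ⊆
      {x | 2/3 ≤ (stmt18SplitF hA (stmt18Tree hA astar s).1 (stmt18Tree hA astar s).2.1
        ((stmt18Tree hA astar s).1 :: (stmt18Tree hA astar s).2.2)).g x} := by
  have hgs := stmt18Tree_split hA astar hastar s
  apply closure_minimal
  · intro x hx
    rw [stmt18Tree_cons] at hx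
    exact hgs.high x hx
  · exact isClosed_le continuous_const hgs.cont

end Stmt18Tree

def stmt18Br (σ : ℕ → Bool) : ℕ → List Bool
  | 0 => []
  | n + 1 => σ n :: stmt18Br σ n

lemma stmt18Br_agree {σ τ : ℕ → Bool} :
    ∀ {n : ℕ}, (∀ k < n, σ k = τ k) → stmt18Br σ n = stmt18Br τ n
  | 0, _ => rfl
  | n + 1, h => by
      rw [stmt18Br, stmt18Br, h n (Nat.lt_succ_self n),
        stmt18Br_agree fun k hk => h k (Nat.lt_succ_of_lt hk)]

/-- Direction (3) ⇒ (1). -/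
lemma stmt18_three_implies_one {X : Type*} [TopologicalSpace X] [T35Space X]
    (hωb : ∀ A : Set X, A.Countable → IsCompact (closure A))
    (hΔ : ∀ D : ℕ → Set X, (∀ n, (D n).Countable) → (∀ n, D (n + 1) ⊆ D n) →
      (⋂ n, D n) = ∅ →
      ∃ V : ℕ → Set X, (∀ n, IsOpen (V n)) ∧ (∀ n, V (n + 1) ⊆ V n) ∧
        (∀ n, D n ⊆ V n) ∧ (⋂ n, V n) = ∅) :
    ∀ A : Set X, A.Nonempty → ∃ a ∈ A, ∃ U : Set X, IsOpen U ∧ U ∩ A = {a} := by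
  intro A hAne
  by_contra hno
  push_neg at hno
  have hA : ∀ a ∈ A, ∀ U : Set X, IsOpen U → U ∩ A ≠ {a} := by
    intro a ha U hU
    exact hno a ha U hU
  obtain ⟨astar, hastar⟩ := hAne
  set pt : List Bool → X := fun s => (stmt18Tree hA astar s).1 with hpt
  set op : List Bool → Set X := fun s => (stmt18Tree hA astar s).2.1 with hop
  set Q : Set X := range pt with hQ
  have hQcnt : Q.Countable := countable_range pt
  set K : Set X := closure Q with hK
  have hKc : IsCompact K := hωb Q hQcnt
  set Φ : X → (List Bool → ℝ) := fun x s =>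
    (stmt18SplitF hA (stmt18Tree hA astar s).1 (stmt18Tree hA astar s).2.1
      ((stmt18Tree hA astar s).1 :: (stmt18Tree hA astar s).2.2)).g x with hΦ
  have hΦc : Continuous Φ :=
    continuous_pi fun s => (stmt18Tree_split hA astar hastar s).cont
  have hCne : ∀ σ : ℕ → Bool, (⋂ n, K ∩ closure (op (stmt18Br σ n))).Nonempty := by
    intro σ
    have hanti : ∀ n, K ∩ closure (op (stmt18Br σ (n + 1))) ⊆
        K ∩ closure (op (stmt18Br σ n)) := by
      intro n
      apply inter_subset_inter_right
      apply closure_mono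
      exact stmt18Tree_op_child hA astar hastar (σ n) (stmt18Br σ n)
    have hanti' : Antitone fun n => K ∩ closure (op (stmt18Br σ n)) :=
      antitone_nat_of_succ_le hanti
    apply IsCompact.nonempty_iInter_of_directed_nonempty_isCompact_isClosed
    · exact hanti'.directed_ge
    · intro n
      refine ⟨pt (stmt18Br σ n), ?_, subset_closure ?_⟩
      · exact subset_closure ⟨stmt18Br σ n, rfl⟩
      · exact (stmt18Tree_inv hA astar hastar (stmt18Br σ n)).2.1
    · exact fun n => hKc.inter_right isClosed_closure
    · exact fun n => isClosed_closure.inter isClosed_closure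
  choose xb hxb using hCne
  have hxbK : ∀ σ, xb σ ∈ K := fun σ => (mem_iInter.mp (hxb σ) 0).1
  have hxbc : ∀ σ n, xb σ ∈ closure (op (stmt18Br σ n)) :=
    fun σ n => (mem_iInter.mp (hxb σ) n).2
  have hinj : Function.Injective fun σ => Φ (xb σ) := by
    intro σ τ heq
    by_contra hστ
    have hex : ∃ n, σ n ≠ τ n := by
      by_contra h
      push_neg at h
      exact hστ (funext h)
    classical
    set n₀ := Nat.find hex with hn₀
    have hfind : σ n₀ ≠ τ n₀ := Nat.find_spec hex
    have hagree : ∀ k < n₀, σ k = τ k := fun k hk => not_not.mp (Nat.find_min hex hk)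
    set r := stmt18Br σ n₀ with hrdef
    have hbrτ : stmt18Br τ n₀ = r := (stmt18Br_agree hagree).symm
    have hσ1 : xb σ ∈ closure (op (σ n₀ :: r)) := hxbc σ (n₀ + 1)
    have hτ1 : xb τ ∈ closure (op (τ n₀ :: r)) := by
      have := hxbc τ (n₀ + 1)
      rwa [show stmt18Br τ (n₀ + 1) = τ n₀ :: r by rw [stmt18Br, hbrτ]] at this
    have key : ∀ x y : X, x ∈ closure (op (false :: r)) → y ∈ closure (op (true :: r)) →
        Φ x ≠ Φ y := by
      intro x y hx hy hxy
      have h1 := stmt18Tree_low hA astar hastar r hx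
      have h2 := stmt18Tree_high hA astar hastar r hy
      have h3 : Φ x r ≤ 1/3 := h1
      have h4 : 2/3 ≤ Φ y r := h2
      rw [hxy] at h3
      linarith
    cases hσn : σ n₀ <;> cases hτn : τ n₀
    · exact hfind (hσn.trans hτn.symm)
    · exact key (xb σ) (xb τ) (hσn ▸ hσ1) (hτn ▸ hτ1) heq
    · exact key (xb τ) (xb σ) (hτn ▸ hτ1) (hσn ▸ hσ1) heq.symm
    · exact hfind (hσn.trans hτn.symm)
  set Y : Set (List Bool → ℝ) := Φ '' K with hY
  have hYc : IsCompact Y := hKc.image hΦc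
  have hYuncnt : ¬ Y.Countable := by
    intro hcnt
    haveI := hcnt.to_subtype
    have hmem : ∀ σ : ℕ → Bool, Φ (xb σ) ∈ Y := fun σ => mem_image_of_mem Φ (hxbK σ)
    have : Function.Injective fun σ : ℕ → Bool => (⟨Φ (xb σ), hmem σ⟩ : ↥Y) := by
      intro σ τ h
      exact hinj (congrArg Subtype.val h)
    exact stmt18_not_countable_nat_bool this.countable
  obtain ⟨Vc, P, hVccnt, hPperf, hVP⟩ :=
    exists_countable_union_perfect_of_isClosed (C := Y) hYc.isClosed
  have hPne : P.Nonempty := by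
    rcases P.eq_empty_or_nonempty with rfl | h
    · exfalso; apply hYuncnt; rw [hVP]; simpa using hVccnt
    · exact h
  have hPY : P ⊆ Φ '' K := by rw [← hY, hVP]; exact subset_union_right
  obtain ⟨M, hMK, hMc, hMP, hmin⟩ := stmt18_exists_minimal_preimage hΦc hKc hPperf.closed hPY
  have hMne : M.Nonempty := by
    obtain ⟨p, hp⟩ := hPne
    have : p ∈ Φ '' M := hMP.symm ▸ hp
    obtain ⟨x, hx, -⟩ := this
    exact ⟨x, hx⟩
  obtain ⟨sP, hsPcnt, hsPdense⟩ := TopologicalSpace.exists_countable_dense ↥P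
  set c' : Set (List Bool → ℝ) := Subtype.val '' sP with hc'
  have hc'cnt : c'.Countable := hsPcnt.image _
  have hc'P : c' ⊆ P := by rintro z ⟨u, -, rfl⟩; exact u.2
  have hdense' : ∀ O : Set (List Bool → ℝ), IsOpen O → (O ∩ P).Nonempty →
      (O ∩ c').Nonempty := by
    rintro O hO ⟨q, hqO, hqP⟩
    have hUopen : IsOpen (Subtype.val ⁻¹' O : Set ↥P) := hO.preimage continuous_subtype_val
    have hUne : (Subtype.val ⁻¹' O : Set ↥P).Nonempty := ⟨⟨q, hqP⟩, hqO⟩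
    obtain ⟨y, hys, hyO⟩ := hsPdense.exists_mem_open hUopen hUne
    exact ⟨y.1, hyO, mem_image_of_mem _ hys⟩
  have hPinf : P.Infinite := by
    intro hfin
    obtain ⟨q, hq⟩ := hPne
    have hacc := hPperf.acc q hq
    rw [accPt_iff_nhds] at hacc
    have hopen : IsOpen ((P \ {q})ᶜ) := ((hfin.diff).isClosed).isOpen_compl
    have hmemq : q ∈ (P \ {q})ᶜ := fun h => h.2 rfl
    obtain ⟨y, ⟨hy1, hy2⟩, hy3⟩ := hacc _ (hopen.mem_nhds hmemq)
    exact hy1 ⟨hy2, hy3⟩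
  have hc'inf : c'.Infinite := by
    intro hfin
    obtain ⟨q, hqP, hqc⟩ : ∃ q, q ∈ P ∧ q ∉ c' := by
      obtain ⟨q, hq⟩ := (hPinf.diff hfin).nonempty
      exact ⟨q, hq.1, hq.2⟩
    obtain ⟨z, hz1, hz2⟩ := hdense' (c'ᶜ) hfin.isClosed.isOpen_compl ⟨q, hqc, hqP⟩
    exact hz1 hz2
  haveI := hc'cnt.to_subtype
  haveI : Infinite ↥c' := hc'inf.to_subtype
  obtain ⟨dnm⟩ := nonempty_denumerable ↥c'
  set p : ℕ → (List Bool → ℝ) := fun k => ((Denumerable.eqv ↥c').symm k : ↥c').1 with hpdef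
  have hpinj : Function.Injective p := fun i j h =>
    (Denumerable.eqv ↥c').symm.injective (Subtype.val_injective h)
  have hpc' : ∀ k, p k ∈ c' := fun k => ((Denumerable.eqv ↥c').symm k).2
  have hprange : ∀ z ∈ c', ∃ k, p k = z := by
    intro z hz
    refine ⟨(Denumerable.eqv ↥c') ⟨z, hz⟩, ?_⟩
    rw [hpdef]
    simp
  have hlift : ∀ k, ∃ m ∈ M, Φ m = p k := by
    intro k
    have : p k ∈ Φ '' M := hMP.symm ▸ (hc'P (hpc' k))
    obtain ⟨m, hm, hmp⟩ := this
    exact ⟨m, hm, hmp⟩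
  choose dpt hdM hdΦ using hlift
  have hdinj : Function.Injective dpt := by
    intro i j h
    apply hpinj
    rw [← hdΦ i, ← hdΦ j, h]
  set D : ℕ → Set X := fun n => dpt '' Ici n with hD
  have hDcnt : ∀ n, (D n).Countable :=
    fun n => ((countable_range dpt).mono (image_subset_range _ _))
  have hDdec : ∀ n, D (n + 1) ⊆ D n := fun n => image_mono (Ici_subset_Ici.mpr (Nat.le_succ n))
  have hDempty : (⋂ n, D n) = ∅ := by
    rw [eq_empty_iff_forall_notMem]
    intro x hx
    rw [mem_iInter] at hx
    obtain ⟨k₀, -, hk₀⟩ := hx 0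
    obtain ⟨k₁, hk₁mem, hk₁⟩ := hx (k₀ + 1)
    have : k₁ = k₀ := hdinj (hk₁.trans hk₀.symm)
    rw [this] at hk₁mem
    exact absurd hk₁mem (by simp)
  obtain ⟨V, hVopen, hVdec, hVD, hVempty⟩ := hΔ D hDcnt hDdec hDempty
  haveI : CompactSpace ↥M := isCompact_iff_compactSpace.mp hMc
  haveI : Nonempty ↥M := hMne.to_subtype
  have hdenseM : ∀ n, Dense (Subtype.val ⁻¹' V n : Set ↥M) := by
    intro n
    rw [dense_iff_inter_open]
    intro U hU hUne
    obtain ⟨W, hW, hWU⟩ := isOpen_induced_iff.mp hU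
    obtain ⟨u, hu⟩ := hUne
    have hWM : (W ∩ M).Nonempty := by
      refine ⟨u.1, ?_, u.2⟩
      rw [← hWU] at hu
      exact hu
    obtain ⟨O, hO, hOP, hMO⟩ := stmt18_minimal_trace hΦc hMc hMP hmin hW hWM
    obtain ⟨q, hqO, hqP⟩ := hOP
    have hfinim : (p '' Iio n).Finite := (finite_Iio n).image p
    have hO₂ : IsOpen (O \ (p '' Iio n)) := hO.sdiff hfinim.isClosed
    have hO₂P : ((O \ (p '' Iio n)) ∩ P).Nonempty := by
      have hacc := hPperf.acc q hqP
      rw [accPt_iff_nhds] at hacc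
      have hopen' : IsOpen (O \ ((p '' Iio n) \ {q})) :=
        hO.sdiff (hfinim.diff).isClosed
      have hmemq : q ∈ O \ ((p '' Iio n) \ {q}) := ⟨hqO, fun h => h.2 rfl⟩
      obtain ⟨y, ⟨⟨hyO, hynpi⟩, hyP⟩, hyq⟩ := hacc _ (hopen'.mem_nhds hmemq)
      exact ⟨y, ⟨⟨hyO, fun hyim => hynpi ⟨hyim, hyq⟩⟩, hyP⟩⟩
    obtain ⟨z, hzO₂, hzc'⟩ := hdense' _ hO₂ hO₂P
    obtain ⟨k, rfl⟩ := hprange z hzc'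
    have hkn : n ≤ k := by
      by_contra hlt
      exact hzO₂.2 (mem_image_of_mem p (by simpa using Nat.lt_of_not_le hlt))
    have hdW : dpt k ∈ W := hMO ⟨hdM k, by rw [mem_preimage, hdΦ k]; exact hzO₂.1⟩
    have hdV : dpt k ∈ V n := hVD n (mem_image_of_mem dpt hkn)
    refine ⟨⟨dpt k, hdM k⟩, ?_, ?_⟩
    · rw [← hWU]; exact hdW
    · exact hdV
  have hGδ : Dense (⋂ n, (Subtype.val ⁻¹' V n : Set ↥M)) :=
    dense_iInter_of_isOpen (fun n => (hVopen n).preimage continuous_subtype_val) hdenseM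
  obtain ⟨m, hm⟩ := hGδ.nonempty
  rw [mem_iInter] at hm
  have : m.1 ∈ ⋂ n, V n := mem_iInter.mpr fun n => hm n
  rw [hVempty] at this
  exact this

/-- A subset `S` of a topological space is scattered if every nonempty `A ⊆ S`
has a point isolated in `A` (in the subspace topology). -/
def ScatteredSet {X : Type*} [TopologicalSpace X] (S : Set X) : Prop :=
  ∀ A ⊆ S, A.Nonempty → ∃ a ∈ A, ∃ U : Set X, IsOpen U ∧ U ∩ A = {a}

/-- A topological space is scattered if every nonempty subset `A` has a point
isolated in `A` (in the subspace topology). -/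
def Scattered (X : Type*) [TopologicalSpace X] : Prop :=
  ∀ A : Set X, A.Nonempty → ∃ a ∈ A, ∃ U : Set X, IsOpen U ∧ U ∩ A = {a}

/-- A topological space `X` is a `Δ₁`-space if for every decreasing sequence
`(D_n)` of countable subsets of `X` with empty intersection there is a decreasing
sequence `(V_n)` of open sets with `D_n ⊆ V_n` for every `n` and with empty
intersection. -/
def Delta1Space (X : Type*) [TopologicalSpace X] : Prop :=
  ∀ D : ℕ → Set X, (∀ n, (D n).Countable) → (∀ n, D (n + 1) ⊆ D n) →
    (⋂ n, D n) = ∅ →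
    ∃ V : ℕ → Set X, (∀ n, IsOpen (V n)) ∧ (∀ n, V (n + 1) ⊆ V n) ∧
      (∀ n, D n ⊆ V n) ∧ (⋂ n, V n) = ∅

/-- Let `X` be a Tychonoff ω-bounded space (the closure of every
countable subset is compact). Then the following are equivalent: (1) `X` is
scattered; (2) every compact subset of `X` is scattered; (3) `X` is a `Δ₁`-space. -/
theorem stmt18 (X : Type*) [TopologicalSpace X] [T35Space X]
    (hωb : ∀ A : Set X, A.Countable → IsCompact (closure A)) :
    List.TFAE
      [ Scattered X,
        ∀ K : Set X, IsCompact K → ScatteredSet K,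
        Delta1Space X ] := by
  tfae_have 1 → 2 := fun h K _ A _ hAne => h A hAne
  tfae_have 2 → 3 := fun h2 => stmt18_two_implies_three hωb (fun K hK => h2 K hK)
  tfae_have 3 → 1 := fun h3 => stmt18_three_implies_one hωb h3
  tfae_finish
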